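/- The Shelah–Soifer graph has no odd cycles: every cycle in the Shelah–Soifer graph has even length. -/

import Mathlib

/-- The Shelah–Soifer graph on `ℝ`: `x` and `y` are adjacent iff
`x - y ∈ (ℚ + √2) ∪ (ℚ + (-√2))`. -/
noncomputable def ShelahSoiferGraph : SimpleGraph ℝ where
  Adj x y := (∃ q : ℚ, x - y = q + Real.sqrt 2) ∨ (∃ q : ℚ, x - y = q - Real.sqrt 2)
  symm := by
    constructor
    rintro x y (⟨q, hq⟩ | ⟨q, hq⟩)
    · exact Or.inr ⟨-q, by push_cast; linarith⟩
    · exact Or.inl ⟨-q, by push_cast; linarith⟩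
  loopless := by
    constructor
    rintro x (⟨q, hq⟩ | ⟨q, hq⟩)
    · exact irrational_sqrt_two ⟨-q, by push_cast; linarith⟩
    · exact irrational_sqrt_two ⟨q, by push_cast; linarith⟩

lemma shelahSoifer_walk_diff {u v : ℝ} (w : ShelahSoiferGraph.Walk u v) :
    ∃ (q : ℚ) (n : ℤ), u - v = q + n * Real.sqrt 2 ∧ Even (n - w.length) := by
  induction w with
  | nil => exact ⟨0, 0, by norm_num, by simp⟩
  | cons h p ih =>
    obtain ⟨q, n, hd, he⟩ := ih
    rcases h with ⟨r, hr⟩ | ⟨r, hr⟩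
    · refine ⟨r + q, n + 1, ?_, ?_⟩
      · push_cast; push_cast at hr hd; linarith
      · obtain ⟨k, hk⟩ := he
        exact ⟨k, by show (n + 1 : ℤ) - ((p.length + 1 : ℕ) : ℤ) = k + k; omega⟩
    · refine ⟨r + q, n - 1, ?_, ?_⟩
      · push_cast; push_cast at hr hd; linarith
      · obtain ⟨k, hk⟩ := he
        exact ⟨k - 1, by show (n - 1 : ℤ) - ((p.length + 1 : ℕ) : ℤ) = (k - 1) + (k - 1); omega⟩

theorem shelahSoifer_no_odd_cycles {x : ℝ} (w : ShelahSoiferGraph.Walk x x)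
    (hw : w.IsCycle) : Even w.length := by
  obtain ⟨q, n, hd, he⟩ := shelahSoifer_walk_diff w
  have hn : n = 0 := by
    by_contra h
    have : Real.sqrt 2 = (-q) / n := by
      field_simp
      nlinarith [hd]
    exact irrational_sqrt_two (by rw [this]; exact ⟨-q / n, by push_cast; ring⟩)
  have h0 : Even (0 - (w.length : ℤ)) := hn ▸ he
  obtain ⟨k, hk⟩ := h0
  exact ⟨(-k).toNat, by omega⟩
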